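/- arXiv:2003.00930 — 3 statements merged into one kernel-verified Lean document; each statement's English description precedes it below -/
import Mathlib

section
/- Let X, Y be i.i.d. nonnegative random variables with common differentiable probability density f on ℝ_+, and let U be Uniform[0,1] independent of (X,Y). If U(X+Y) has the same distribution as X, then f(x) = (1/m) e^{−x/m} for some m > 0; i.e., the exponential distributions are the unique fixed points of the operation (X,Y,U) ↦ U(X+Y) among distributions with differentiable densities. -/
open MeasureTheory Set
open Real
open scoped ENNReal

/-- If an integrable function vanishing on `(-∞,0]` has all exponential moments zero,
it is zero a.e. -/
lemma moments_unique (h : ℝ → ℝ) (hint : Integrable h)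
    (hsupp : ∀ x ≤ (0:ℝ), h x = 0)
    (hmom : ∀ n : ℕ, ∫ x, Real.exp (-(n:ℝ) * x) * h x = 0) :
    ∀ᵐ x, h x = 0 := by
  apply ae_eq_zero_of_integral_contDiff_smul_eq_zero hint.locallyIntegrable
  intro ψ hψ hψc
  simp only [smul_eq_mul]
  -- radius of support of ψ
  obtain ⟨R, hR⟩ : ∃ R : ℝ, tsupport ψ ⊆ Metric.closedBall 0 R :=
    (hψc.isBounded).subset_closedBall 0
  have hψz : ∀ x : ℝ, R < |x| → ψ x = 0 := by
    intro x hx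
    apply image_eq_zero_of_notMem_tsupport
    intro hmem
    have := hR hmem
    simp [Metric.mem_closedBall, Real.dist_eq] at this
    linarith
  -- the function G on [0,1]
  set G : ℝ → ℝ := fun y => if 0 < y then ψ (-Real.log y) else 0 with hG
  have hGcont : Continuous G := by
    rw [continuous_iff_continuousAt]
    intro y₀
    rcases lt_trichotomy y₀ 0 with hy | hy | hy
    · have : ∀ y ∈ Iio (0:ℝ), G y = 0 := by
        intro y hy'; simp only [hG]; rw [if_neg]; exact not_lt.2 (le_of_lt hy')
      exact ContinuousAt.congr continuousAt_const
        ((eventually_nhds_iff.2 ⟨Iio 0, fun y hy' => (this y hy').symm, isOpen_Iio, hy⟩))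
    · subst hy
      have key : ∀ y ∈ Iio (Real.exp (-(|R|+1))), G y = 0 := by
        intro y hy'
        simp only [hG]
        split_ifs with h0
        · apply hψz
          have hlog : Real.log y < -(|R|+1) := by
            have := Real.log_lt_log h0 hy'
            rwa [Real.log_exp] at this
          have h1 : |R| + 1 < -Real.log y := by linarith
          have h2 : 0 < -Real.log y := lt_of_le_of_lt (by positivity) h1
          rw [abs_of_pos h2]
          calc R ≤ |R| := le_abs_self R
          _ < -Real.log y := by linarith
        · rfl
      refine ContinuousAt.congr continuousAt_const
        (eventually_nhds_iff.2 ⟨Iio (Real.exp (-(|R|+1))), fun y hy' => (key y hy').symm,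
          isOpen_Iio, by simp [Real.exp_pos]⟩)
    · have : ∀ y ∈ Ioi (0:ℝ), G y = ψ (-Real.log y) := by
        intro y hy'; simp only [hG]; rw [if_pos (mem_Ioi.mp hy')]
      refine ContinuousAt.congr ?_
        (eventually_nhds_iff.2 ⟨Ioi 0, fun y hy' => (this y hy').symm, isOpen_Ioi, hy⟩)
      exact hψ.continuous.continuousAt.comp
        ((Real.continuousAt_log (ne_of_gt hy)).neg)
  -- pointwise representation
  have hrepr : ∀ x : ℝ, ψ x * h x = G (Real.exp (-x)) * h x := by
    intro x
    rcases le_or_gt x 0 with hx | hx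
    · rw [hsupp x hx]; ring
    · simp only [hG]
      rw [if_pos (Real.exp_pos _), Real.log_exp, neg_neg]
  -- integrability of exponential moments
  have hterm_int : ∀ n : ℕ, Integrable (fun x => Real.exp (-(n:ℝ) * x) * h x) := by
    intro n
    have hc : Continuous fun x : ℝ => Real.exp (-(n:ℝ) * x) := by continuity
    have hbd : ∀ x : ℝ, ‖Real.exp (-(n:ℝ) * x) * h x‖ ≤ ‖h x‖ := by
      intro x
      rcases le_or_gt x 0 with hx | hx
      · rw [hsupp x hx, mul_zero]
      · have h1 : Real.exp (-(n:ℝ) * x) ≤ 1 := by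
          rw [Real.exp_le_one_iff]
          have : (0:ℝ) ≤ (n:ℝ) * x := by positivity
          linarith
        rw [Real.norm_eq_abs, abs_mul, Real.abs_exp, Real.norm_eq_abs]
        nlinarith [abs_nonneg (h x), Real.exp_pos (-(n:ℝ) * x)]
    exact Integrable.mono' hint.norm
      (hc.aestronglyMeasurable.mul hint.aestronglyMeasurable)
      (Filter.Eventually.of_forall hbd)
  -- polynomial moments vanish
  have hqmom : ∀ q : Polynomial ℝ, ∫ x, q.eval (Real.exp (-x)) * h x = 0 := by
    intro q
    have hsplit : (fun x => q.eval (Real.exp (-x)) * h x)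
        = fun x => ∑ i ∈ Finset.range (q.natDegree + 1),
            q.coeff i * (Real.exp (-(i:ℝ) * x) * h x) := by
      funext x
      rw [Polynomial.eval_eq_sum_range, Finset.sum_mul]
      refine Finset.sum_congr rfl fun i _ => ?_
      rw [← Real.exp_nat_mul]
      ring_nf
    rw [hsplit, integral_finset_sum _ (fun i _ => (hterm_int i).const_mul _)]
    refine Finset.sum_eq_zero fun i _ => ?_
    rw [integral_const_mul, hmom i, mul_zero]
  -- the approximation step
  have key : ∀ ε > 0, |∫ x, ψ x * h x| ≤ ε * ∫ x, ‖h x‖ := by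
    intro ε hε
    obtain ⟨q, hq⟩ := exists_polynomial_near_of_continuousOn 0 1 G hGcont.continuousOn ε hε
    have hψh_int : Integrable (fun x => ψ x * h x) := by
      obtain ⟨C, hC⟩ := hψ.continuous.bounded_above_of_compact_support hψc
      exact hint.bdd_mul (c := C) hψ.continuous.aestronglyMeasurable (Filter.Eventually.of_forall hC)
    have hGh_int : Integrable (fun x => G (Real.exp (-x)) * h x) := by
      have : (fun x => G (Real.exp (-x)) * h x) = fun x => ψ x * h x := by
        funext x; exact (hrepr x).symm
      rw [this]; exact hψh_int
    have hqh_int : Integrable (fun x => q.eval (Real.exp (-x)) * h x) := by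
      have hsplit : (fun x => q.eval (Real.exp (-x)) * h x)
          = fun x => ∑ i ∈ Finset.range (q.natDegree + 1),
              q.coeff i * (Real.exp (-(i:ℝ) * x) * h x) := by
        funext x
        rw [Polynomial.eval_eq_sum_range, Finset.sum_mul]
        refine Finset.sum_congr rfl fun i _ => ?_
        rw [← Real.exp_nat_mul]
        ring_nf
      rw [hsplit]
      exact integrable_finset_sum _ (fun i _ => (hterm_int i).const_mul _)
    have hIeq : ∫ x, ψ x * h x
        = ∫ x, (G (Real.exp (-x)) - q.eval (Real.exp (-x))) * h x := by
      have h1 : ∫ x, ψ x * h x = ∫ x, G (Real.exp (-x)) * h x := by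
        congr 1; funext x; exact hrepr x
      have h2 : (fun x => (G (Real.exp (-x)) - q.eval (Real.exp (-x))) * h x)
          = fun x => G (Real.exp (-x)) * h x - q.eval (Real.exp (-x)) * h x := by
        funext x; ring
      rw [h1, h2, integral_sub hGh_int hqh_int, hqmom q, sub_zero]
    rw [hIeq]
    have hbound : ∀ x : ℝ, ‖(G (Real.exp (-x)) - q.eval (Real.exp (-x))) * h x‖ ≤ ε * ‖h x‖ := by
      intro x
      rcases le_or_gt x 0 with hx | hx
      · rw [hsupp x hx]; simp
      · have hmem : Real.exp (-x) ∈ Icc (0:ℝ) 1 := by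
          constructor
          · exact (Real.exp_pos _).le
          · rw [Real.exp_le_one_iff]; linarith
        have := hq _ hmem
        rw [norm_mul]
        apply mul_le_mul_of_nonneg_right _ (norm_nonneg _)
        rw [Real.norm_eq_abs, abs_sub_comm]
        exact this.le
    calc |∫ x, (G (Real.exp (-x)) - q.eval (Real.exp (-x))) * h x|
        ≤ ∫ x, ε * ‖h x‖ := by
          rw [← Real.norm_eq_abs]
          apply norm_integral_le_of_norm_le (hint.norm.const_mul ε)
          filter_upwards with x using hbound x
      _ = ε * ∫ x, ‖h x‖ := integral_const_mul _ _
  -- conclude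
  set I := ∫ x, ψ x * h x with hI
  set C := ∫ x, ‖h x‖ with hC
  have hC0 : 0 ≤ C := integral_nonneg fun x => norm_nonneg _
  have habs : |I| ≤ 0 := by
    refine le_of_forall_pos_le_add fun ε hε => ?_
    have h1 := key (ε / (C + 1)) (by positivity)
    have h2 : ε / (C + 1) * C ≤ ε := by
      rw [div_mul_eq_mul_div, div_le_iff₀ (by linarith)]
      nlinarith
    linarith
  exact abs_eq_zero.mp (le_antisymm habs (abs_nonneg I))


lemma laplace_fix (μ : Measure ℝ) [IsProbabilityMeasure μ]
    (hfix : Measure.map (fun z : ℝ × ℝ × ℝ => z.2.2 * (z.1 + z.2.1))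
        (μ.prod (μ.prod (volume.restrict (Icc (0:ℝ) 1)))) = μ) (p : ℝ) :
    (∫⁻ x, ENNReal.ofReal (Real.exp (-p * x)) ∂μ)
      = ∫⁻ u in Icc (0:ℝ) 1,
          (∫⁻ x, ENNReal.ofReal (Real.exp (-(p*u) * x)) ∂μ) ^ 2 := by
  set ν := volume.restrict (Icc (0:ℝ) 1) with hν
  have hg : ∀ q : ℝ, Measurable fun t : ℝ => ENNReal.ofReal (Real.exp (-q * t)) :=
    fun q => (Real.measurable_exp.comp (measurable_id.const_mul (-q))).ennreal_ofReal
  have hT : Measurable fun z : ℝ × ℝ × ℝ => z.2.2 * (z.1 + z.2.1) :=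
    (measurable_snd.comp measurable_snd).mul
      (measurable_fst.add (measurable_fst.comp measurable_snd))
  have hF : Measurable fun z : ℝ × ℝ × ℝ => ENNReal.ofReal (Real.exp (-p * (z.2.2 * (z.1 + z.2.1)))) :=
    (hg p).comp hT
  calc (∫⁻ x, ENNReal.ofReal (Real.exp (-p * x)) ∂μ)
      = ∫⁻ z : ℝ × ℝ × ℝ, ENNReal.ofReal (Real.exp (-p * (z.2.2 * (z.1 + z.2.1))))
          ∂(μ.prod (μ.prod ν)) := by
        conv_lhs => rw [← hfix]
        rw [lintegral_map (hg p) hT]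
    _ = ∫⁻ x, ∫⁻ yz : ℝ × ℝ, ENNReal.ofReal (Real.exp (-p * (yz.2 * (x + yz.1))))
          ∂(μ.prod ν) ∂μ := by
        rw [lintegral_prod _ hF.aemeasurable]
    _ = ∫⁻ x, ∫⁻ y, ∫⁻ u, ENNReal.ofReal (Real.exp (-p * (u * (x + y)))) ∂ν ∂μ ∂μ := by
        congr 1; funext x
        have hm : Measurable fun yz : ℝ × ℝ => ENNReal.ofReal (Real.exp (-p * (yz.2 * (x + yz.1)))) :=
          (hg p).comp ((measurable_snd).mul (measurable_const.add measurable_fst))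
        rw [lintegral_prod _ hm.aemeasurable]
    _ = ∫⁻ x, ∫⁻ u, ∫⁻ y, ENNReal.ofReal (Real.exp (-p * (u * (x + y)))) ∂μ ∂ν ∂μ := by
        congr 1; funext x
        have hm : Measurable fun yu : ℝ × ℝ => ENNReal.ofReal (Real.exp (-p * (yu.2 * (x + yu.1)))) :=
          (hg p).comp ((measurable_snd).mul (measurable_const.add measurable_fst))
        exact lintegral_lintegral_swap hm.aemeasurable
    _ = ∫⁻ u, ∫⁻ x, ∫⁻ y, ENNReal.ofReal (Real.exp (-p * (u * (x + y)))) ∂μ ∂μ ∂ν := by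
        have hm : Measurable fun xuy : (ℝ × ℝ) × ℝ =>
            ENNReal.ofReal (Real.exp (-p * (xuy.1.2 * (xuy.1.1 + xuy.2)))) :=
          (hg p).comp ((measurable_snd.comp measurable_fst).mul
            ((measurable_fst.comp measurable_fst).add measurable_snd))
        have hm2 : Measurable fun xu : ℝ × ℝ =>
            ∫⁻ y, ENNReal.ofReal (Real.exp (-p * (xu.2 * (xu.1 + y)))) ∂μ :=
          hm.lintegral_prod_right'
        exact lintegral_lintegral_swap hm2.aemeasurable
    _ = ∫⁻ u in Icc (0:ℝ) 1,
          (∫⁻ x, ENNReal.ofReal (Real.exp (-(p*u) * x)) ∂μ) ^ 2 := by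
        rw [hν]
        congr 1; funext u
        have hfac : ∀ x y : ℝ, ENNReal.ofReal (Real.exp (-p * (u * (x + y))))
            = ENNReal.ofReal (Real.exp (-(p*u) * x)) * ENNReal.ofReal (Real.exp (-(p*u) * y)) := by
          intro x y
          rw [← ENNReal.ofReal_mul (Real.exp_pos _).le, ← Real.exp_add]
          ring_nf
        calc ∫⁻ x, ∫⁻ y, ENNReal.ofReal (Real.exp (-p * (u * (x + y)))) ∂μ ∂μ
            = ∫⁻ x, ENNReal.ofReal (Real.exp (-(p*u) * x))
                * ∫⁻ y, ENNReal.ofReal (Real.exp (-(p*u) * y)) ∂μ ∂μ := by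
              congr 1; funext x
              simp_rw [hfac x]
              rw [lintegral_const_mul _ (hg (p*u))]
          _ = (∫⁻ x, ENNReal.ofReal (Real.exp (-(p*u) * x)) ∂μ) ^ 2 := by
              rw [lintegral_mul_const _ (hg (p*u)), sq]

lemma my_integral_exp_neg_mul {b : ℝ} (hb : 0 < b) :
    ∫ x in Ioi (0:ℝ), Real.exp (-b * x) = 1 / b := by
  have hderiv : ∀ x ∈ Ici (0:ℝ), HasDerivAt (fun x => -Real.exp (-b * x) / b)
      (Real.exp (-b * x)) x := by
    intro x _
    have h1 : HasDerivAt (fun x : ℝ => -b * x) (-b) x := by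
      simpa using (hasDerivAt_id x).const_mul (-b)
    have h2 := (h1.exp).neg.div_const b
    refine h2.congr_deriv ?_
    rw [div_eq_iff hb.ne']; ring
  have htend : Filter.Tendsto (fun x => -Real.exp (-b * x) / b) Filter.atTop (nhds 0) := by
    have : Filter.Tendsto (fun x : ℝ => -b * x) Filter.atTop Filter.atBot :=
      Filter.tendsto_id.const_mul_atTop_of_neg (neg_neg_iff_pos.2 hb)
    have h3 := (Real.tendsto_exp_atBot.comp this).neg.div_const b
    simpa using h3
  have := integral_Ioi_of_hasDerivAt_of_tendsto' hderiv (exp_neg_integrableOn_Ioi 0 hb) htend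
  rw [this]
  rw [mul_zero, Real.exp_zero]
  ring


/-- Uniqueness of the exponential fixed point: let `X, Y` be i.i.d. nonnegative random
variables with common differentiable probability density `f` on `ℝ_+`, and `U` Uniform[0,1]
independent of `(X,Y)`.  If `U(X+Y)` has the same law as `X`, then
`f(x) = (1/m)e^{−x/m}` for some `m > 0`. -/
theorem exponential_unique_fixed_point (f : ℝ → ℝ)
    (hf_meas : Measurable f) (hf_nonneg : ∀ x, 0 ≤ f x)
    (hf_supp : ∀ x < (0 : ℝ), f x = 0)
    (hf_int : ∫ x, f x = 1)
    (hf_diff : DifferentiableOn ℝ f (Ioi 0))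
    (hfix : Measure.map (fun p : ℝ × ℝ × ℝ => p.2.2 * (p.1 + p.2.1))
        ((volume.withDensity fun x => ENNReal.ofReal (f x)).prod
          ((volume.withDensity fun x => ENNReal.ofReal (f x)).prod
            (volume.restrict (Icc (0 : ℝ) 1))))
      = volume.withDensity fun x => ENNReal.ofReal (f x)) :
    ∃ m > (0 : ℝ), ∀ x > (0 : ℝ), f x = (1 / m) * Real.exp (-x / m) := by
  set μ : Measure ℝ := volume.withDensity fun x => ENNReal.ofReal (f x) with hμ
  -- f is integrable
  have hf_integrable : Integrable f := by
    by_contra hcon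
    rw [integral_undef hcon] at hf_int
    exact one_ne_zero hf_int.symm
  -- μ is a probability measure
  have hμuniv : μ univ = 1 := by
    rw [hμ, withDensity_apply _ MeasurableSet.univ, Measure.restrict_univ,
      ← ofReal_integral_eq_lintegral_ofReal hf_integrable
        (Filter.Eventually.of_forall hf_nonneg), hf_int, ENNReal.ofReal_one]
  haveI : IsProbabilityMeasure μ := ⟨hμuniv⟩
  -- a.e. nonneg
  have hae : ∀ᵐ x ∂μ, 0 ≤ x := by
    rw [ae_iff]
    have : {x : ℝ | ¬ 0 ≤ x} = Iio 0 := by ext x; simp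
    rw [this, hμ, withDensity_apply _ measurableSet_Iio]
    rw [setLIntegral_congr_fun measurableSet_Iio
      (fun x hx => by rw [hf_supp x hx, ENNReal.ofReal_zero])]
    simp
  -- the Laplace transform
  set L : ℝ → ℝ≥0∞ := fun p => ∫⁻ x, ENNReal.ofReal (Real.exp (-p * x)) ∂μ with hL
  have hgmeas : ∀ q : ℝ, Measurable fun t : ℝ => ENNReal.ofReal (Real.exp (-q * t)) :=
    fun q => (Real.measurable_exp.comp (measurable_id.const_mul (-q))).ennreal_ofReal
  have hLle : ∀ p : ℝ, 0 ≤ p → L p ≤ 1 := by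
    intro p hp
    calc L p ≤ ∫⁻ _, 1 ∂μ := by
          apply lintegral_mono_ae
          filter_upwards [hae] with x hx
          rw [show (1:ℝ≥0∞) = ENNReal.ofReal 1 by simp]
          apply ENNReal.ofReal_le_ofReal
          rw [Real.exp_le_one_iff]
          have : 0 ≤ p * x := mul_nonneg hp hx
          linarith
      _ = 1 := by rw [lintegral_one, hμuniv]
  have hL0 : L 0 = 1 := by
    rw [hL]
    simp only [neg_zero, zero_mul, Real.exp_zero, ENNReal.ofReal_one]
    rw [lintegral_one, hμuniv]
  have hLpos : ∀ p : ℝ, 0 < L p := by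
    intro p
    rw [hL]
    rw [lintegral_pos_iff_support (hgmeas p)]
    have : (Function.support fun x => ENNReal.ofReal (Real.exp (-p * x))) = univ := by
      ext x
      simp only [Function.mem_support, mem_univ, iff_true]
      intro hzero
      have := Real.exp_pos (-p * x)
      have h2 := ENNReal.ofReal_eq_zero.mp hzero
      linarith
    rw [this, hμuniv]
    exact one_pos
  -- key ENNReal identity
  have hENN : ∀ p : ℝ, L p = ∫⁻ u in Icc (0:ℝ) 1, (L (p*u)) ^ 2 := by
    intro p
    exact laplace_fix μ hfix p
  -- real Laplace transform
  set Lr : ℝ → ℝ := fun p => (L p).toReal with hLr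
  have hLmeas : Measurable L := by
    rw [hL]
    exact Measurable.lintegral_prod_right'
      ((Real.measurable_exp.comp ((measurable_fst.neg).mul measurable_snd)).ennreal_ofReal)
  have hLrmeas : Measurable Lr := hLmeas.ennreal_toReal
  have hLrnonneg : ∀ p : ℝ, 0 ≤ Lr p := fun p => ENNReal.toReal_nonneg
  have hLrle : ∀ p : ℝ, 0 ≤ p → Lr p ≤ 1 := by
    intro p hp
    rw [hLr]
    simpa using ENNReal.toReal_mono (by norm_num) (hLle p hp)
  have hLrpos : ∀ p : ℝ, 0 ≤ p → 0 < Lr p := by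
    intro p hp
    rw [hLr]
    exact ENNReal.toReal_pos (hLpos p).ne' (lt_of_le_of_lt (hLle p hp) (by norm_num)).ne
  have hLr0 : Lr 0 = 1 := by rw [hLr]; simp [hL0]
  -- real identity on Icc
  have hIcc : ∀ p : ℝ, 0 ≤ p → Lr p = ∫ u in Icc (0:ℝ) 1, (Lr (p*u))^2 := by
    intro p hp
    have hmeasu : AEMeasurable (fun u => (L (p*u))^2) (volume.restrict (Icc (0:ℝ) 1)) :=
      ((hLmeas.comp (measurable_id.const_mul p)).pow_const 2).aemeasurable
    have hfin : ∀ᵐ u ∂(volume.restrict (Icc (0:ℝ) 1)), (L (p*u))^2 < ⊤ := by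
      filter_upwards [ae_restrict_mem measurableSet_Icc] with u hu
      have h1 : L (p*u) ≤ 1 := hLle _ (mul_nonneg hp hu.1)
      calc (L (p*u))^2 ≤ 1^2 := pow_le_pow_left' h1 2
        _ < ⊤ := by norm_num
    have h2 := integral_toReal hmeasu hfin
    calc Lr p = (L p).toReal := rfl
      _ = (∫⁻ u in Icc (0:ℝ) 1, (L (p*u))^2).toReal := by rw [hENN p]
      _ = ∫ u in Icc (0:ℝ) 1, ((L (p*u))^2).toReal := h2.symm
      _ = ∫ u in Icc (0:ℝ) 1, (Lr (p*u))^2 := by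
            congr 1; funext u; rw [ENNReal.toReal_pow]
  -- interval-integral identity
  have hkey : ∀ p : ℝ, 0 < p → Lr p = p⁻¹ * ∫ s in (0:ℝ)..p, (Lr s)^2 := by
    intro p hp
    rw [hIcc p hp.le, integral_Icc_eq_integral_Ioc,
      ← intervalIntegral.integral_of_le (zero_le_one), 
      intervalIntegral.integral_comp_mul_left (fun s => (Lr s)^2) hp.ne']
    rw [mul_zero, mul_one, smul_eq_mul]
  have hcexp : ∀ q : ℝ, Continuous fun x : ℝ => Real.exp (-q * x) :=
    fun q => Real.continuous_exp.comp (continuous_const.mul continuous_id)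
  -- Bochner representation and continuity
  have hLreal : ∀ p : ℝ, Lr p = ∫ x, Real.exp (-p * x) ∂μ := by
    intro p
    rw [integral_eq_lintegral_of_nonneg_ae
      (Filter.Eventually.of_forall (fun x => (Real.exp_pos _).le))
      ((hcexp p).aestronglyMeasurable)]
  have hcont : ∀ p : ℝ, 0 < p → ContinuousAt Lr p := by
    intro p hp
    have hc : ContinuousAt (fun q => ∫ x, Real.exp (-q * x) ∂μ) p := by
      apply continuousAt_of_dominated (bound := fun _ => (1:ℝ))
      · filter_upwards with q
        exact (hcexp q).aestronglyMeasurable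
      · filter_upwards [Ioi_mem_nhds hp] with q hq
        filter_upwards [hae] with x hx
        rw [Real.norm_eq_abs, Real.abs_exp, Real.exp_le_one_iff]
        have : (0:ℝ) ≤ q * x := mul_nonneg (le_of_lt hq) hx
        linarith
      · exact integrable_const 1
      · filter_upwards with x
        have : Continuous fun q : ℝ => Real.exp (-q * x) :=
          Real.continuous_exp.comp ((continuous_neg).mul continuous_const)
        exact this.continuousAt
    exact hc.congr (by filter_upwards with q using (hLreal q).symm)
  -- interval integrability of Lr^2
  have hII : ∀ p : ℝ, 0 ≤ p → IntervalIntegrable (fun s => (Lr s)^2) volume 0 p := by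
    intro p hp
    rw [intervalIntegrable_iff, uIoc_of_le hp]
    apply Integrable.mono' (g := fun _ => (1:ℝ))
    · exact integrableOn_const measure_Ioc_lt_top.ne
    · exact ((hLrmeas.pow_const 2).aestronglyMeasurable).restrict
    · filter_upwards [ae_restrict_mem measurableSet_Ioc] with s hs
      rw [Real.norm_eq_abs, abs_of_nonneg (by positivity)]
      exact pow_le_one₀ (hLrnonneg s) (hLrle s hs.1.le)
  -- derivative of Lr
  have hLrderiv : ∀ p : ℝ, 0 < p →
      HasDerivAt Lr (((Lr p)^2 - Lr p)/p) p := by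
    intro p hp
    set A : ℝ → ℝ := fun q => ∫ s in (0:ℝ)..q, (Lr s)^2 with hA
    have hAderiv : HasDerivAt A ((Lr p)^2) p := by
      apply intervalIntegral.integral_hasDerivAt_right (hII p hp.le)
      · exact (hLrmeas.pow_const 2).stronglyMeasurable.stronglyMeasurableAtFilter
      · exact (hcont p hp).pow 2
    have h1 : HasDerivAt (fun q => q⁻¹ * A q) (-(p^2)⁻¹ * A p + p⁻¹ * (Lr p)^2) p :=
      (hasDerivAt_inv hp.ne').mul hAderiv
    have heq : (fun q => q⁻¹ * A q) =ᶠ[nhds p] Lr := by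
      filter_upwards [Ioi_mem_nhds hp] with q hq
      exact (hkey q hq).symm
    have h2 := h1.congr_of_eventuallyEq heq.symm
    have hAp : A p = p * Lr p := by
      rw [hkey p hp]; field_simp; rfl
    refine h2.congr_deriv ?_
    rw [hAp]
    field_simp
    ring
  -- Lr 1 < 1
  have hintexp : Integrable (fun x : ℝ => Real.exp (-1 * x)) μ := by
    apply Integrable.mono' (integrable_const (1:ℝ)) ((hcexp 1).aestronglyMeasurable)
    filter_upwards [hae] with x hx
    rw [Real.norm_eq_abs, Real.abs_exp, Real.exp_le_one_iff]
    linarith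
  have hμzero : μ ({(0:ℝ)} : Set ℝ) = 0 := by
    have habs : μ ≪ volume := withDensity_absolutelyContinuous volume _
    exact habs (by simp)
  have hLr1lt : Lr 1 < 1 := by
    have hpos : 0 < ∫ x, (1 - Real.exp (-1 * x)) ∂μ := by
      rcases lt_or_ge 0 (∫ x, (1 - Real.exp (-1 * x)) ∂μ) with h | h
      · exact h
      · exfalso
        have hnonneg : 0 ≤ᵐ[μ] fun x => 1 - Real.exp (-1 * x) := by
          filter_upwards [hae] with x hx
          have : Real.exp (-1 * x) ≤ 1 := by
            rw [Real.exp_le_one_iff]; linarith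
          simp only [Pi.zero_apply]
          linarith
        have hint : Integrable (fun x => 1 - Real.exp (-1 * x)) μ :=
          (integrable_const 1).sub hintexp
        have hzero : ∫ x, (1 - Real.exp (-1 * x)) ∂μ = 0 :=
          le_antisymm h (integral_nonneg_of_ae hnonneg)
        have haezero := (integral_eq_zero_iff_of_nonneg_ae hnonneg hint).mp hzero
        have hx0 : ∀ᵐ x ∂μ, x = 0 := by
          filter_upwards [haezero] with x hx
          simp only [Pi.zero_apply] at hx
          have h1 : Real.exp (-1 * x) = 1 := by linarith
          have h2 : -1 * x = 0 := by
            exact Real.exp_injective (show Real.exp (-1*x) = Real.exp 0 by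
              rw [Real.exp_zero]; exact h1)
          linarith
        have : μ {x : ℝ | ¬ x = 0} = 0 := hx0
        have huniv : μ univ ≤ μ ({(0:ℝ)} : Set ℝ) + μ {x : ℝ | ¬ x = 0} := by
          apply le_trans (measure_mono (by intro x _; by_cases hx : x = 0 <;> simp [hx]))
            (measure_union_le _ _)
        rw [hμuniv, hμzero, this] at huniv
        simp at huniv
    have hsub : ∫ x, (1 - Real.exp (-1 * x)) ∂μ = 1 - Lr 1 := by
      rw [integral_sub (integrable_const 1) hintexp, integral_const]
      rw [hLreal 1]
      simp
    rw [hsub] at hpos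
    linarith
  -- the constant c and explicit form of Lr
  set W : ℝ → ℝ := fun p => (1 - Lr p)/(p * Lr p) with hWdef
  have hWderiv : ∀ p : ℝ, 0 < p → HasDerivAt W 0 p := by
    intro p hp
    have hD := hLrderiv p hp
    have hu : HasDerivAt (fun q => 1 - Lr q) (-(((Lr p)^2 - Lr p)/p)) p := by
      have h := (hasDerivAt_const p (1:ℝ)).sub hD; rwa [zero_sub] at h
    have hv : HasDerivAt (fun q : ℝ => q * Lr q)
        (1 * Lr p + p * (((Lr p)^2 - Lr p)/p)) p := (hasDerivAt_id p).mul hD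
    have hvne : p * Lr p ≠ 0 := by
      have := hLrpos p hp.le
      positivity
    have hdiv := hu.div hv hvne
    refine hdiv.congr_deriv ?_
    have hLp := hLrpos p hp.le
    field_simp
    ring
  have hWconst : ∀ p : ℝ, 0 < p → W p = W 1 := by
    have key : ∀ a b : ℝ, 0 < a → a ≤ b → W b = W a := by
      intro a b ha hab
      have hcw : ContinuousOn W (Icc a b) := by
        intro x hx
        exact ((hWderiv x (lt_of_lt_of_le ha hx.1)).continuousAt).continuousWithinAt
      have hdw : ∀ x ∈ Ico a b, HasDerivWithinAt W 0 (Ici x) x := by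
        intro x hx
        exact (hWderiv x (lt_of_lt_of_le ha hx.1)).hasDerivWithinAt
      exact constant_of_has_deriv_right_zero hcw hdw b (right_mem_Icc.mpr hab)
    intro p hp
    rcases le_total p 1 with h | h
    · exact (key p 1 hp h).symm
    · exact key 1 p one_pos h
  set c : ℝ := 1 / Lr 1 - 1 with hcdef
  have hL1pos : 0 < Lr 1 := hLrpos 1 zero_le_one
  have hcpos : 0 < c := by
    rw [hcdef]
    have h2 : 1 < 1 / Lr 1 := (one_lt_div hL1pos).mpr hLr1lt
    linarith
  have hform : ∀ p : ℝ, 0 < p → Lr p = 1 / (1 + c * p) := by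
    intro p hp
    have h1 : W p = c := by
      rw [hWconst p hp, hWdef]
      simp only
      rw [one_mul, hcdef]
      field_simp
    rw [hWdef] at h1
    simp only at h1
    have hne : p * Lr p ≠ 0 := by
      have := hLrpos p hp.le
      positivity
    have h2 : 1 - Lr p = c * (p * Lr p) := by
      rw [div_eq_iff hne] at h1
      linarith
    have h3 : Lr p * (1 + c * p) = 1 := by ring_nf; ring_nf at h2; linarith
    have h4 : 1 + c * p ≠ 0 := by
      intro hzero
      rw [hzero, mul_zero] at h3
      simp at h3
    field_simp
    linarith [h3]
  -- Lr as an integral against f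
  have hae0 : ∀ᵐ x : ℝ ∂volume, x ≠ 0 := by
    rw [ae_iff]
    have : {x : ℝ | ¬ x ≠ 0} = {0} := by ext x; simp
    rw [this, Real.volume_singleton]
  have hLrf : ∀ p : ℝ, Lr p = ∫ x in Ioi (0:ℝ), f x * Real.exp (-p * x) := by
    intro p
    have h1 : L p = ∫⁻ x, ENNReal.ofReal (f x * Real.exp (-p * x)) := by
      rw [hL]
      simp only
      rw [hμ, lintegral_withDensity_eq_lintegral_mul volume hf_meas.ennreal_ofReal (hgmeas p)]
      congr 1
      funext x
      rw [Pi.mul_apply, ← ENNReal.ofReal_mul (hf_nonneg x)]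
    have h2 : ∫ x, f x * Real.exp (-p * x) = (∫⁻ x, ENNReal.ofReal (f x * Real.exp (-p * x))).toReal := by
      apply integral_eq_lintegral_of_nonneg_ae
      · exact Filter.Eventually.of_forall fun x => mul_nonneg (hf_nonneg x) (Real.exp_pos _).le
      · exact (hf_meas.mul (hcexp p).measurable).aestronglyMeasurable
    have h3 : ∫ x in Ioi (0:ℝ), f x * Real.exp (-p * x) = ∫ x, f x * Real.exp (-p * x) := by
      apply setIntegral_eq_integral_of_ae_compl_eq_zero
      filter_upwards [hae0] with x hx hnotin
      have hxle : x < 0 := by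
        rcases lt_trichotomy x 0 with h | h | h
        · exact h
        · exact absurd h hx
        · exact absurd h hnotin
      rw [hf_supp x hxle, zero_mul]
    rw [h3, h2, hLr]
    simp only
    rw [h1]
  -- moments of the exponential density
  have hcinv : 0 < 1/c := by positivity
  have hmomexp : ∀ p : ℝ, 0 ≤ p →
      ∫ x in Ioi (0:ℝ), (1/c * Real.exp (-x/c)) * Real.exp (-p * x) = 1 / (1 + c * p) := by
    intro p hp
    have hb : 0 < p + 1/c := by positivity
    have hring : ∀ x : ℝ, (1/c * Real.exp (-x/c)) * Real.exp (-p * x)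
        = 1/c * Real.exp (-(p + 1/c) * x) := by
      intro x
      rw [mul_assoc, ← Real.exp_add]
      congr 2
      field_simp
      ring
    simp_rw [hring]
    rw [integral_const_mul, my_integral_exp_neg_mul hb]
    rw [div_mul_div_comm, one_mul]
    congr 1
    field_simp
    ring
  have hLrval : ∀ p : ℝ, 0 ≤ p → Lr p = 1 / (1 + c * p) := by
    intro p hp
    rcases hp.eq_or_lt with h | h
    · rw [← h, hLr0, mul_zero, add_zero, div_one]
    · exact hform p h
  have hgoal : ∀ x : ℝ, 0 < x → f x = 1/c * Real.exp (-x/c) := by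
    set g : ℝ → ℝ := fun x => 1/c * Real.exp (-x/c) with hgdef
    have hgc : Continuous g := by
      apply continuous_const.mul
      exact Real.continuous_exp.comp ((continuous_id.neg).div_const c)
    have hgint : IntegrableOn g (Ioi (0:ℝ)) := by
      have hrw : g = fun x => 1/c * Real.exp (-(1/c) * x) := by
        funext x
        show 1/c * Real.exp (-x/c) = 1/c * Real.exp (-(1/c) * x)
        rw [show -x/c = -(1/c)*x from by ring]
      rw [hrw]
      exact (exp_neg_integrableOn_Ioi 0 hcinv).const_mul _
    set hfn : ℝ → ℝ := (Ioi (0:ℝ)).indicator (fun x => f x - g x) with hhdef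
    have hhint : Integrable hfn := by
      rw [hhdef, integrable_indicator_iff measurableSet_Ioi]
      exact hf_integrable.integrableOn.sub hgint
    have hhsupp : ∀ x ≤ (0:ℝ), hfn x = 0 := by
      intro x hx
      rw [hhdef, indicator_of_notMem (by simpa using hx)]
    have hterm : ∀ n : ℕ, ∫ x, Real.exp (-(n:ℝ) * x) * hfn x = 0 := by
      intro n
      have hnn : (0:ℝ) ≤ (n:ℝ) := Nat.cast_nonneg n
      have h1 : (fun x => Real.exp (-(n:ℝ) * x) * hfn x)
          = (Ioi (0:ℝ)).indicator
              (fun x => f x * Real.exp (-(n:ℝ)*x) - g x * Real.exp (-(n:ℝ)*x)) := by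
        funext x
        rw [hhdef]
        by_cases hx : x ∈ Ioi (0:ℝ)
        · rw [indicator_of_mem hx, indicator_of_mem hx]; ring
        · rw [indicator_of_notMem hx, indicator_of_notMem hx, mul_zero]
      rw [h1, integral_indicator measurableSet_Ioi]
      have hfmint : IntegrableOn (fun x => f x * Real.exp (-(n:ℝ)*x)) (Ioi 0) := by
        apply Integrable.mono' hf_integrable.integrableOn
        · exact (hf_meas.mul (hcexp (n:ℝ)).measurable).aestronglyMeasurable.restrict
        · filter_upwards [ae_restrict_mem measurableSet_Ioi] with x hx
          have h2 : Real.exp (-(n:ℝ)*x) ≤ 1 := by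
            rw [Real.exp_le_one_iff]
            have : (0:ℝ) ≤ (n:ℝ) * x := mul_nonneg hnn (le_of_lt hx)
            linarith
          rw [Real.norm_eq_abs, abs_mul, abs_of_nonneg (hf_nonneg x), Real.abs_exp]
          nlinarith [hf_nonneg x, Real.exp_pos (-(n:ℝ)*x)]
      have hgmint : IntegrableOn (fun x => g x * Real.exp (-(n:ℝ)*x)) (Ioi 0) := by
        have hrw : (fun x => g x * Real.exp (-(n:ℝ)*x))
            = fun x => 1/c * Real.exp (-((n:ℝ)+1/c) * x) := by
          funext x
          rw [hgdef]
          simp only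
          rw [mul_assoc, ← Real.exp_add]
          congr 2
          field_simp
          ring
        rw [hrw]
        exact (exp_neg_integrableOn_Ioi 0 (by positivity)).const_mul _
      rw [integral_sub hfmint hgmint]
      have hfv : ∫ x in Ioi (0:ℝ), f x * Real.exp (-(n:ℝ)*x) = 1 / (1 + c * (n:ℝ)) := by
        rw [← hLrf (n:ℝ), hLrval (n:ℝ) hnn]
      have hgv : ∫ x in Ioi (0:ℝ), g x * Real.exp (-(n:ℝ)*x) = 1 / (1 + c * (n:ℝ)) := by
        rw [hgdef]
        exact hmomexp (n:ℝ) hnn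
      rw [hfv, hgv, sub_self]
    have hae_eq : ∀ᵐ x : ℝ, hfn x = 0 := moments_unique hfn hhint hhsupp hterm
    intro x₀ hx₀
    by_contra hne
    have hd : ContinuousAt (fun x => f x - g x) x₀ :=
      (hf_diff.continuousOn.continuousAt (Ioi_mem_nhds hx₀)).sub hgc.continuousAt
    have hne' : f x₀ - g x₀ ≠ 0 := sub_ne_zero.mpr hne
    have hev : ∀ᶠ x in nhds x₀, (f x - g x) ≠ 0 := hd.eventually_ne hne'
    have hev3 : ∀ᶠ x in nhds x₀, hfn x ≠ 0 := by
      filter_upwards [hev, Ioi_mem_nhds hx₀] with x h1 h2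
      rw [hhdef, indicator_of_mem h2]
      exact h1
    obtain ⟨ε, hε, hball⟩ := Metric.eventually_nhds_iff_ball.mp hev3
    have hnull : volume {x : ℝ | hfn x ≠ 0} = 0 := by
      have := hae_eq
      rw [ae_iff] at this
      exact this
    have hzero : volume (Metric.ball x₀ ε) = 0 :=
      measure_mono_null (fun y hy => hball y hy) hnull
    rw [Real.volume_ball] at hzero
    have : (0:ℝ) < 2 * ε := by linarith
    rw [ENNReal.ofReal_eq_zero] at hzero
    linarith
  exact ⟨c, hcpos, fun x hx => hgoal x hx⟩
end

section
/- If F̄ : (0,∞) → (0,1) is a differentiable function satisfying the ODE t F̄'(t) = F̄(t)² − F̄(t) with F̄(t) → 1 as t → 0+, then F̄(t) = a/(a + t) for some constant a > 0. -/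
open Set Filter Topology

/-- If `F̄ : (0,∞) → (0,1)` is differentiable and satisfies the ODE
`t F̄'(t) = F̄(t)² − F̄(t)` with `F̄(t) → 1` as `t → 0⁺`, then `F̄(t) = a/(a+t)` for some
constant `a > 0` (the Laplace transform of an exponential distribution). -/
theorem laplace_ode_solution (F : ℝ → ℝ)
    (hrange : ∀ t > (0 : ℝ), F t ∈ Ioo (0 : ℝ) 1)
    (hdiff : ∀ t > (0 : ℝ), DifferentiableAt ℝ F t)
    (hode : ∀ t > (0 : ℝ), t * deriv F t = F t ^ 2 - F t)
    (hlim : Tendsto F (nhdsWithin 0 (Ioi 0)) (nhds 1)) :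
    ∃ a > (0 : ℝ), ∀ t > (0 : ℝ), F t = a / (a + t) := by
  set g : ℝ → ℝ := fun t => t * F t / (1 - F t) with hg
  have hkey : ∀ t > (0 : ℝ), HasDerivAt g 0 t := by
    intro t ht
    have hF := (hdiff t ht).hasDerivAt
    have h1 : (1 : ℝ) - F t ≠ 0 := by
      have := (hrange t ht).2; linarith
    have hnum : HasDerivAt (fun s => s * F s) (1 * F t + t * deriv F t) t :=
      (hasDerivAt_id t).mul hF
    have hden : HasDerivAt (fun s => 1 - F s) (0 - deriv F t) t :=
      (hasDerivAt_const t 1).sub hF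
    have hdiv := hnum.div hden h1
    convert hdiv using 1
    case e'_4 => rfl
    case e'_5 => rfl
    case e'_8 => rfl
    have ho := hode t ht
    rw [eq_comm, div_eq_zero_iff]
    left
    linear_combination ho
  obtain ⟨hF1pos, hF1lt⟩ := hrange 1 one_pos
  set a : ℝ := F 1 / (1 - F 1) with ha
  have hapos : 0 < a := div_pos hF1pos (by linarith)
  refine ⟨a, hapos, fun t ht => ?_⟩
  have hconst : g t = g 1 := by
    have : ∀ x ∈ Ioi (0 : ℝ), fderivWithin ℝ g (Ioi 0) x = 0 := by
      intro x hx
      rw [fderivWithin_of_isOpen isOpen_Ioi hx]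
      exact (hkey x hx).hasFDerivAt.fderiv.trans (by ext; simp)
    exact (convex_Ioi 0).is_const_of_fderivWithin_eq_zero
      (fun x hx => ((hkey x hx).differentiableAt.differentiableWithinAt))
      this ht (mem_Ioi.mpr one_pos)
  have h1t : (1 : ℝ) - F t ≠ 0 := by have := (hrange t ht).2; linarith
  have hgt : t * F t / (1 - F t) = a := by
    have : g 1 = a := by simp [hg, ha]
    simpa [hg, this] using hconst
  have hat : a + t ≠ 0 := by positivity
  field_simp at hgt ⊢
  nlinarith [hgt]
end

section
/- For the wealth-exchange jump process with N agents and interaction rate 1/N, the carré-du-champ (previsible quadratic variation rate) of the martingale M_t^{g,N} = ⟨g, μ_t^N⟩ − ⟨g, μ_0^N⟩ − ∫_0^t ⟨g, Q^{(N)}(μ_s^N)⟩ ds satisfies α^{g,N}(μ_s^{(2,N)}) ≤ (16/N) ||g||_∞², and consequently E[ sup_{s ≤ T} |M_s^{g,N}|² ] ≤ (64/N) ||g||_∞² T, so sup_{s≤T} |M_s^{g,N}| → 0 in L² as N → ∞. -/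
open MeasureTheory ProbabilityTheory Set Filter

/-- The carré-du-champ (previsible quadratic variation rate)
`α^{g,N} = ∫_0^1 ∫∫ ((1/N) K_g(x,y,r))² 1{x+y ≤ W_N} N μ^{(2,N)}(dx,dy) dr`
of the martingale `M^{g,N}`, evaluated at an empirical configuration `x : Fin N → ℝ`
(note `N μ^{(2,N)} = (1/N) Σ_{i≠j} δ_{(x_i,x_j)}`). -/
noncomputable def alphaVal (N : ℕ) (WN : ℝ) (g : ℝ → ℝ) (x : Fin N → ℝ) : ℝ :=
  ∫ r in Icc (0 : ℝ) 1, (1 / (N : ℝ)) * ∑ i : Fin N, ∑ j : Fin N,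
    if i ≠ j ∧ x i + x j ≤ WN then
      ((1 / (N : ℝ)) *
        (g (r * (x i + x j)) + g ((1 - r) * (x i + x j)) - g (x i) - g (x j))) ^ 2
    else 0

/-- Integral of a function bounded above by a nonnegative constant, over a finite
measure, is at most the constant times the total mass (with no measurability
assumption: a non-integrable function has integral `0`). -/
lemma integral_le_const_mul_mass {α : Type*} [MeasurableSpace α] (μ : Measure α)
    [IsFiniteMeasure μ] (f : α → ℝ) (C : ℝ) (hC : 0 ≤ C) (hf : ∀ x, f x ≤ C) :
    ∫ x, f x ∂μ ≤ C * (μ Set.univ).toReal := by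
  by_cases h : Integrable f μ
  · calc ∫ x, f x ∂μ ≤ ∫ _x, C ∂μ := integral_mono h (integrable_const C) hf
      _ = C * (μ Set.univ).toReal := by simp [integral_const, mul_comm, Measure.real]
  · rw [integral_undef h]; positivity

lemma alphaVal_nonneg (N : ℕ) (WN : ℝ) (g : ℝ → ℝ) (x : Fin N → ℝ) :
    0 ≤ alphaVal N WN g x := by
  apply integral_nonneg
  intro r
  apply mul_nonneg (by positivity)
  apply Finset.sum_nonneg; intro i _
  apply Finset.sum_nonneg; intro j _
  split <;> positivity

lemma alphaVal_le (N : ℕ) (hN : 1 ≤ N) (WN : ℝ) (B : ℝ) (hB : 0 ≤ B)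
    (g : ℝ → ℝ) (hg : ∀ x, |g x| ≤ B) (x : Fin N → ℝ) :
    alphaVal N WN g x ≤ 16 / (N : ℝ) * B ^ 2 := by
  have hN0 : (0 : ℝ) < N := by exact_mod_cast hN
  have hC : (0 : ℝ) ≤ 16 / (N : ℝ) * B ^ 2 := by positivity
  have key : ∀ r : ℝ, ((1 / (N : ℝ)) * ∑ i : Fin N, ∑ j : Fin N,
      if i ≠ j ∧ x i + x j ≤ WN then
        ((1 / (N : ℝ)) *
          (g (r * (x i + x j)) + g ((1 - r) * (x i + x j)) - g (x i) - g (x j))) ^ 2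
      else 0) ≤ 16 / (N : ℝ) * B ^ 2 := by
    intro r
    have hterm : ∀ i j : Fin N,
        (if i ≠ j ∧ x i + x j ≤ WN then
          ((1 / (N : ℝ)) *
            (g (r * (x i + x j)) + g ((1 - r) * (x i + x j)) - g (x i) - g (x j))) ^ 2
        else 0) ≤ ((1 / (N : ℝ)) * (4 * B)) ^ 2 := by
      intro i j
      split
      · set e := g (r * (x i + x j)) + g ((1 - r) * (x i + x j)) - g (x i) - g (x j)
        have h1 := abs_le.mp (hg (r * (x i + x j)))
        have h2 := abs_le.mp (hg ((1 - r) * (x i + x j)))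
        have h3 := abs_le.mp (hg (x i))
        have h4 := abs_le.mp (hg (x j))
        have he : |e| ≤ 4 * B := by
          rw [abs_le]; constructor <;> simp only [e] <;> linarith [h1.1, h1.2, h2.1, h2.2, h3.1, h3.2, h4.1, h4.2]
        have habs : |(1 / (N : ℝ)) * e| ≤ (1 / (N : ℝ)) * (4 * B) := by
          rw [abs_mul, abs_of_nonneg (by positivity : (0:ℝ) ≤ 1 / (N:ℝ))]
          exact mul_le_mul_of_nonneg_left he (by positivity)
        calc ((1 / (N : ℝ)) * e) ^ 2 = |(1 / (N : ℝ)) * e| ^ 2 := (sq_abs _).symm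
          _ ≤ ((1 / (N : ℝ)) * (4 * B)) ^ 2 :=
            pow_le_pow_left₀ (abs_nonneg _) habs 2
      · positivity
    have hsum : (∑ i : Fin N, ∑ j : Fin N,
        if i ≠ j ∧ x i + x j ≤ WN then
          ((1 / (N : ℝ)) *
            (g (r * (x i + x j)) + g ((1 - r) * (x i + x j)) - g (x i) - g (x j))) ^ 2
        else 0) ≤ (N : ℝ) * ((N : ℝ) * ((1 / (N : ℝ)) * (4 * B)) ^ 2) := by
      calc (∑ i : Fin N, ∑ j : Fin N, _) ≤
          ∑ _i : Fin N, ∑ _j : Fin N, ((1 / (N : ℝ)) * (4 * B)) ^ 2 :=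
            Finset.sum_le_sum (fun i _ => Finset.sum_le_sum (fun j _ => hterm i j))
        _ = (N : ℝ) * ((N : ℝ) * ((1 / (N : ℝ)) * (4 * B)) ^ 2) := by
            simp [Finset.sum_const, Finset.card_univ, mul_assoc]
    calc (1 / (N : ℝ)) * ∑ i : Fin N, ∑ j : Fin N, _
        ≤ (1 / (N : ℝ)) * ((N : ℝ) * ((N : ℝ) * ((1 / (N : ℝ)) * (4 * B)) ^ 2)) :=
          mul_le_mul_of_nonneg_left hsum (by positivity)
      _ = 16 / (N : ℝ) * B ^ 2 := by field_simp; ring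
  have := integral_le_const_mul_mass (volume.restrict (Icc (0:ℝ) 1)) _ _ hC key
  simpa [alphaVal, Measure.restrict_apply, Real.volume_Icc] using this

/-- For the wealth-exchange jump process with `N` agents and interaction rate `1/N`:
the carré-du-champ satisfies `α^{g,N} ≤ (16/N)‖g‖_∞²`; consequently, via Doob's `L²`
inequality `E[sup_{s≤T}|M_s^{g,N}|²] ≤ 4 E ∫_0^T α ds`, one gets
`E[sup_{s≤T}|M_s^{g,N}|²] ≤ (64/N)‖g‖_∞² T`, so `sup_{s≤T}|M^{g,N}| → 0` in `L²` as
`N → ∞`. -/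
theorem martingale_sup_L2_bound
    {Ω : Type*} [MeasureSpace Ω] [IsProbabilityMeasure (ℙ : Measure Ω)]
    (B T : ℝ) (hB : 0 ≤ B) (hT : 0 < T)
    (g : ℝ → ℝ) (hg : ∀ x, |g x| ≤ B)
    (WN : ℕ → ℝ)
    (X : (N : ℕ) → ℝ → Fin N → Ω → ℝ)
    (M : (N : ℕ) → ℝ → Ω → ℝ)
    (hDoob : ∀ N, 1 ≤ N →
      ∫ ω, (⨆ s ∈ Icc (0 : ℝ) T, |M N s ω|) ^ 2
        ≤ 4 * ∫ ω, ∫ s in Icc (0 : ℝ) T, alphaVal N (WN N) g (fun i => X N s i ω)) :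
    (∀ N, 1 ≤ N → ∀ x : Fin N → ℝ, alphaVal N (WN N) g x ≤ 16 / (N : ℝ) * B ^ 2) ∧
    (∀ N, 1 ≤ N →
      ∫ ω, (⨆ s ∈ Icc (0 : ℝ) T, |M N s ω|) ^ 2 ≤ 64 / (N : ℝ) * B ^ 2 * T) ∧
    Tendsto (fun N : ℕ => ∫ ω, (⨆ s ∈ Icc (0 : ℝ) T, |M N s ω|) ^ 2)
      atTop (nhds 0) := by
  have halpha : ∀ N, 1 ≤ N → ∀ x : Fin N → ℝ,
      alphaVal N (WN N) g x ≤ 16 / (N : ℝ) * B ^ 2 :=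
    fun N hN x => alphaVal_le N hN (WN N) B hB g hg x
  have hmain : ∀ N, 1 ≤ N →
      ∫ ω, (⨆ s ∈ Icc (0 : ℝ) T, |M N s ω|) ^ 2 ≤ 64 / (N : ℝ) * B ^ 2 * T := by
    intro N hN
    have hN0 : (0 : ℝ) < N := by exact_mod_cast hN
    have hC : (0 : ℝ) ≤ 16 / (N : ℝ) * B ^ 2 := by positivity
    have hCT : (0 : ℝ) ≤ 16 / (N : ℝ) * B ^ 2 * T := by positivity
    -- inner bound
    have hinner : ∀ ω : Ω,
        ∫ s in Icc (0 : ℝ) T, alphaVal N (WN N) g (fun i => X N s i ω)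
          ≤ 16 / (N : ℝ) * B ^ 2 * T := by
      intro ω
      have := integral_le_const_mul_mass (volume.restrict (Icc (0:ℝ) T))
        (fun s => alphaVal N (WN N) g (fun i => X N s i ω)) _ hC
        (fun s => halpha N hN _)
      simpa [Measure.restrict_apply, Real.volume_Icc, hT.le] using this
    have houter : ∫ ω, ∫ s in Icc (0 : ℝ) T, alphaVal N (WN N) g (fun i => X N s i ω)
        ≤ 16 / (N : ℝ) * B ^ 2 * T := by
      have := integral_le_const_mul_mass (ℙ : Measure Ω)
        (fun ω => ∫ s in Icc (0 : ℝ) T, alphaVal N (WN N) g (fun i => X N s i ω))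
        _ hCT hinner
      simpa using this
    calc ∫ ω, (⨆ s ∈ Icc (0 : ℝ) T, |M N s ω|) ^ 2
        ≤ 4 * ∫ ω, ∫ s in Icc (0 : ℝ) T, alphaVal N (WN N) g (fun i => X N s i ω) :=
          hDoob N hN
      _ ≤ 4 * (16 / (N : ℝ) * B ^ 2 * T) := by linarith
      _ = 64 / (N : ℝ) * B ^ 2 * T := by ring
  refine ⟨halpha, hmain, ?_⟩
  have hnonneg : ∀ N : ℕ, 0 ≤ ∫ ω, (⨆ s ∈ Icc (0 : ℝ) T, |M N s ω|) ^ 2 :=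
    fun N => integral_nonneg fun ω => sq_nonneg _
  have hlim : Tendsto (fun N : ℕ => 64 / (N : ℝ) * B ^ 2 * T) atTop (nhds 0) := by
    have h : (fun N : ℕ => 64 / (N : ℝ) * B ^ 2 * T)
        = fun N : ℕ => (64 * B ^ 2 * T) / (N : ℝ) := by
      funext N; ring
    rw [h]
    exact tendsto_const_div_atTop_nhds_zero_nat _
  apply squeeze_zero' (Eventually.of_forall hnonneg) ?_ hlim
  filter_upwards [eventually_ge_atTop 1] with N hN
  exact hmain N hN
end
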